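/- For any balanced directed graph G = (V, E) on n vertices and any parameter ε ∈ (0, 0.1), the maximum out-degree satisfies max_{v∈V} δ⁺(v) ≤ (1 + ε/2)·ρ(G) + 4·log n / ε, where ρ(G) is the density of the underlying undirected graph. -/

import Mathlib

open Finset
open scoped NNRat

/-- Out-degree of `v` in the directed edge set `E`. -/
def outdeg {V : Type*} [DecidableEq V] (E : Finset (V × V)) (v : V) : ℕ :=
  (E.filter fun e => e.1 = v).card

/-- A directed graph is balanced if `δ⁺(u) ≤ δ⁺(v) + 1` for every edge `u → v`. -/
def IsBalanced {V : Type*} [DecidableEq V] (E : Finset (V × V)) : Prop :=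
  ∀ e ∈ E, outdeg E e.1 ≤ outdeg E e.2 + 1

/-- Density of the underlying undirected graph: the maximum over nonempty `S ⊆ V`
of `|E[S]| / |S|`. -/
def ddensity {V : Type*} [Fintype V] [DecidableEq V] (E : Finset (V × V)) : ℚ≥0 :=
  ((univ : Finset V).powerset.filter fun S => S.Nonempty).sup
    fun S => ((E.filter fun e => e.1 ∈ S ∧ e.2 ∈ S).card : ℚ≥0) / (S.card : ℚ≥0)

/-- BFS ball of radius `i` around `v₀`. -/
def reachSet {V : Type*} [DecidableEq V] (E : Finset (V × V)) (v₀ : V) : ℕ → Finset V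
  | 0 => {v₀}
  | i+1 => reachSet E v₀ i ∪ (E.filter fun e => e.1 ∈ reachSet E v₀ i).image Prod.snd

lemma reachSet_nonempty {V : Type*} [DecidableEq V] (E : Finset (V × V)) (v₀ : V) :
    ∀ i, (reachSet E v₀ i).Nonempty
  | 0 => ⟨v₀, by simp [reachSet]⟩
  | i+1 => (reachSet_nonempty E v₀ i).mono (by simp [reachSet])

lemma reachSet_outdeg {V : Type*} [DecidableEq V] (E : Finset (V × V)) (v₀ : V)
    (hbal : IsBalanced E) :
    ∀ i, ∀ v ∈ reachSet E v₀ i, outdeg E v₀ ≤ outdeg E v + i := by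
  intro i
  induction i with
  | zero => intro v hv; simp only [reachSet, mem_singleton] at hv; simp [hv]
  | succ i ih =>
    intro v hv
    simp only [reachSet, mem_union, Finset.mem_image, Finset.mem_filter] at hv
    rcases hv with hv | ⟨e, ⟨heE, he1⟩, he2⟩
    · exact (ih v hv).trans (by omega)
    · have h1 := ih e.1 he1
      have h2 := hbal e heE
      subst he2
      omega

lemma card_filter_fst_mem {V : Type*} [DecidableEq V] (E : Finset (V × V)) (S : Finset V) :
    (E.filter fun e => e.1 ∈ S).card = ∑ u ∈ S, outdeg E u := by
  unfold outdeg
  rw [Finset.card_filter]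
  have : ∀ u ∈ S, (E.filter fun e => e.1 = u).card = ∑ e ∈ E, if e.1 = u then 1 else 0 := by
    intro u _; rw [Finset.card_filter]
  rw [Finset.sum_congr rfl this, Finset.sum_comm]
  refine Finset.sum_congr rfl fun e _ => ?_
  exact (Finset.sum_ite_eq S e.1 (fun _ => 1)).symm

lemma le_ddensity {V : Type*} [Fintype V] [DecidableEq V] (E : Finset (V × V))
    (S : Finset V) (hS : S.Nonempty) :
    ((E.filter fun e => e.1 ∈ S ∧ e.2 ∈ S).card : ℚ≥0) / (S.card : ℚ≥0) ≤ ddensity E := by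
  unfold ddensity
  have hmem : S ∈ (univ : Finset V).powerset.filter fun T => T.Nonempty := by
    simp only [Finset.mem_filter, Finset.mem_powerset]
    exact ⟨Finset.subset_univ S, hS⟩
  exact Finset.le_sup
    (f := fun T : Finset V => ((E.filter fun e => e.1 ∈ T ∧ e.2 ∈ T).card : ℚ≥0) / (T.card : ℚ≥0))
    hmem

lemma density_bound {V : Type*} [Fintype V] [DecidableEq V] (E : Finset (V × V))
    (S : Finset V) (hS : S.Nonempty) :
    ((E.filter fun e => e.1 ∈ S ∧ e.2 ∈ S).card : ℝ) ≤ (ddensity E : ℝ) * S.card := by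
  have h1 := le_ddensity E S hS
  have hpos : (0 : ℚ≥0) < (S.card : ℚ≥0) := by exact_mod_cast hS.card_pos
  rw [div_le_iff₀ hpos] at h1
  exact_mod_cast h1

set_option maxHeartbeats 1000000 in
/-- In any balanced directed graph on `n ≥ 2` vertices and for any `ε ∈ (0, 0.1)`,
the maximum out-degree is at most `(1 + ε/2)·ρ(G) + 4·log n / ε`. -/
theorem max_outdeg_le_density {V : Type*} [Fintype V] [DecidableEq V]
    (E : Finset (V × V)) (ε : ℝ) (hn : 2 ≤ Fintype.card V)
    (hbal : IsBalanced E) (hε0 : 0 < ε) (hε1 : ε < 0.1) :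
    (((univ : Finset V).sup (outdeg E) : ℕ) : ℝ) ≤
      (1 + ε / 2) * (ddensity E : ℝ) + 4 * Real.log (Fintype.card V) / ε := by
  by_contra hcon
  push_neg at hcon
  set n := Fintype.card V with hndef
  set Δ := (univ : Finset V).sup (outdeg E) with hΔdef
  set ρ : ℝ := (ddensity E : ℝ) with hρdef
  have hρ0 : 0 ≤ ρ := by positivity
  have hn1 : (1 : ℝ) < n := by exact_mod_cast lt_of_lt_of_le one_lt_two (by exact_mod_cast hn)
  have hlogn : 0 < Real.log n := Real.log_pos hn1
  have hL : 0 < 4 * Real.log n / ε := by positivity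
  -- Δ ≥ 1
  have hΔpos : 0 < Δ := by
    by_contra h
    push_neg at h
    interval_cases Δ
    simp only [Nat.cast_zero] at hcon
    nlinarith
  -- vertex of max out-degree
  have huniv : (univ : Finset V).Nonempty :=
    Finset.card_pos.mp (by rw [Finset.card_univ]; omega)
  obtain ⟨v₀, -, hv₀⟩ := Finset.exists_mem_eq_sup (univ : Finset V) huniv (outdeg E)
  -- ρ > 0
  have hEne : 0 < E.card := by
    have : 0 < (E.filter fun e => e.1 = v₀).card := by
      rw [← outdeg, ← hv₀]; exact hΔpos
    exact lt_of_lt_of_le this (Finset.card_le_card (Finset.filter_subset _ _))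
  have hρpos : 0 < ρ := by
    have h1 := le_ddensity E (univ : Finset V) huniv
    have h2 : (E.filter fun e => e.1 ∈ (univ : Finset V) ∧ e.2 ∈ (univ : Finset V)) = E := by
      simp
    rw [h2] at h1
    have h3 : (0 : ℚ≥0) < (E.card : ℚ≥0) / ((univ : Finset V).card : ℚ≥0) := by
      apply div_pos (by exact_mod_cast hEne)
      have : 0 < (univ : Finset V).card := Finset.card_pos.mpr huniv
      exact_mod_cast this
    have : (0 : ℚ≥0) < ddensity E := lt_of_lt_of_le h3 h1
    rw [hρdef]
    exact_mod_cast this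
  set K := ⌈4 * Real.log n / ε⌉₊ with hKdef
  have hK1 : 1 ≤ K := Nat.one_le_iff_ne_zero.mpr (by
    simp only [hKdef, ne_eq, Nat.ceil_eq_zero, not_le]; exact hL)
  set T : ℕ → Finset V := reachSet E v₀ with hTdef
  -- growth lemma
  have hgrow : ∀ i, i < K → (1 + ε / 2) * (T i).card < (T (i + 1)).card := by
    intro i hi
    have hiK : (i : ℝ) < 4 * Real.log n / ε := by
      rw [← Nat.lt_ceil]; exact hi
    have hTine : (T i).Nonempty := reachSet_nonempty E v₀ i
    have hTipos : (0 : ℝ) < (T i).card := by exact_mod_cast hTine.card_pos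
    -- every vertex of T i has out-degree ≥ Δ - i
    have hdeg : ∀ u ∈ T i, (Δ : ℝ) - i ≤ (outdeg E u : ℝ) := by
      intro u hu
      have h := reachSet_outdeg E v₀ hbal i u hu
      have h2 : Δ ≤ outdeg E u + i := by rw [hΔdef, hv₀]; exact h
      have h3 : (Δ : ℝ) ≤ (outdeg E u : ℝ) + (i : ℝ) := by exact_mod_cast h2
      linarith
    -- edge count
    have hsum : ((T i).card : ℝ) * ((Δ : ℝ) - (i : ℝ))
        ≤ ((E.filter fun e => e.1 ∈ T i).card : ℝ) := by
      rw [card_filter_fst_mem]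
      push_cast
      calc ((T i).card : ℝ) * ((Δ : ℝ) - (i : ℝ))
          = ∑ _u ∈ T i, ((Δ : ℝ) - (i : ℝ)) := by rw [Finset.sum_const, nsmul_eq_mul]
        _ ≤ ∑ u ∈ T i, (outdeg E u : ℝ) := Finset.sum_le_sum hdeg
    have hsub : (E.filter fun e => e.1 ∈ T i)
        ⊆ E.filter fun e => e.1 ∈ T (i + 1) ∧ e.2 ∈ T (i + 1) := by
      intro e he
      rw [Finset.mem_filter] at he ⊢
      refine ⟨he.1, ?_, ?_⟩
      · show e.1 ∈ reachSet E v₀ (i + 1)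
        rw [reachSet]; exact Finset.mem_union_left _ he.2
      · show e.2 ∈ reachSet E v₀ (i + 1)
        rw [reachSet]
        apply Finset.mem_union_right
        exact Finset.mem_image.mpr ⟨e, Finset.mem_filter.mpr ⟨he.1, he.2⟩, rfl⟩
    have hdens := density_bound E (T (i + 1)) (reachSet_nonempty E v₀ (i + 1))
    have hchain : ((T i).card : ℝ) * ((Δ : ℝ) - (i : ℝ)) ≤ ρ * (T (i + 1)).card := by
      calc ((T i).card : ℝ) * ((Δ : ℝ) - (i : ℝ))
          ≤ ((E.filter fun e => e.1 ∈ T i).card : ℝ) := hsum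
        _ ≤ ((E.filter fun e => e.1 ∈ T (i+1) ∧ e.2 ∈ T (i+1)).card : ℝ) := by
            exact_mod_cast Finset.card_le_card hsub
        _ ≤ ρ * (T (i + 1)).card := hdens
    have hgap : (1 + ε / 2) * ρ < (Δ : ℝ) - i := by linarith
    have hmul : ρ * ((1 + ε / 2) * ((T i).card : ℝ)) < ρ * ((T (i + 1)).card : ℝ) := by
      nlinarith [mul_lt_mul_of_pos_right hgap hTipos]
    exact (mul_lt_mul_iff_right₀ hρpos).mp hmul
  -- exponential growth
  have hexp : ∀ i, i ≤ K → (1 + ε / 2) ^ i ≤ ((T i).card : ℝ) := by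
    intro i
    induction i with
    | zero => intro _; simp [hTdef, reachSet]
    | succ i ih =>
      intro hik
      have h1 := ih (Nat.le_of_succ_le hik)
      have h2 := hgrow i hik
      have hb : (0:ℝ) < 1 + ε / 2 := by linarith
      calc (1 + ε / 2) ^ (i + 1) = (1 + ε / 2) * (1 + ε / 2) ^ i := by ring
      _ ≤ (1 + ε / 2) * (T i).card := by nlinarith
      _ ≤ ((T (i+1)).card : ℝ) := le_of_lt h2
  -- (1+ε/2)^K > n
  have hlogeps : ε / 4 < Real.log (1 + ε / 2) := by
    have h1 : (0:ℝ) < 1 / (1 + ε / 2) := by positivity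
    have h2 := Real.log_le_sub_one_of_pos h1
    rw [Real.log_div one_ne_zero (by positivity), Real.log_one] at h2
    have h3 : (ε / 2) / (1 + ε / 2) ≤ Real.log (1 + ε / 2) := by
      have : 1 / (1 + ε / 2) - 1 = -((ε / 2) / (1 + ε / 2)) := by
        field_simp
        ring
      linarith [h2, this ▸ h2]
    have h4 : ε / 4 < (ε / 2) / (1 + ε / 2) := by
      rw [lt_div_iff₀ (by linarith)]
      nlinarith
    linarith
  have hKge : 4 * Real.log n / ε ≤ (K : ℝ) := Nat.le_ceil _
  have hfinal : (n : ℝ) < (1 + ε / 2) ^ K := by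
    have hKpos : (0:ℝ) < K := by exact_mod_cast hK1
    have h5 : Real.log n < (K : ℝ) * Real.log (1 + ε / 2) := by
      have h6 : Real.log n ≤ (K : ℝ) * (ε / 4) := by
        rw [div_le_iff₀ hε0] at hKge
        nlinarith
      nlinarith
    have h7 : Real.log n < Real.log ((1 + ε / 2) ^ K) := by
      rw [Real.log_pow]; exact_mod_cast h5
    have hnpos : (0:ℝ) < n := by linarith
    exact (Real.log_lt_log_iff hnpos (by positivity)).mp h7
  have hTK : ((T K).card : ℝ) ≤ n := by
    exact_mod_cast Finset.card_le_card (Finset.subset_univ (T K))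
  have := hexp K le_rfl
  linarith
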